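/- (Theorem 1, part 2, GCN form.) Let the graph on n nodes be a disjoint union of k fully connected components encoded by c : Fin n → Fin k, with Ā = D̃^{-1/2} Ã D̃^{-1/2} (Ã = A + I, D̃ its diagonal degree matrix), and let H = σ(Ā X W) with X ∈ ℝ^{n×F}, W ∈ ℝ^{F×F'}, and σ applied entrywise. Suppose σ : ℝ → ℝ is injective, the linear map x ↦ x W from ℝ^{1×F} to ℝ^{1×F'} is injective, and the nodes i, j lie in distinct components S_a = {v : c(v) = c(i)} and S_b = {u : c(u) = c(j)} (c(i) ≠ c(j)) whose feature sums are never proportional: for every ε ∈ ℝ, Σ_{v ∈ S_a} X_{v:} ≠ ε · Σ_{u ∈ S_b} X_{u:}. Then the corresponding rows of H differ: H_{i:} ≠ H_{j:}. -/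

import Mathlib

open Matrix

/-- Theorem 1, part 2 (GCN form): for a disjoint union of fully connected
components encoded by `c`, with `H = σ(Ā X W)` applied entrywise, if `σ` is
injective, `x ↦ x ᵥ* W` is injective, nodes `i, j` lie in distinct components,
and the component feature sums are never proportional, then `H i ≠ H j`. -/
theorem gcn_diff_component_diff_embedding (n k F F' : ℕ) (c : Fin n → Fin k)
    (A Atil Dinvsqrt Abar : Matrix (Fin n) (Fin n) ℝ)
    (X : Matrix (Fin n) (Fin F) ℝ) (W : Matrix (Fin F) (Fin F') ℝ)
    (σ : ℝ → ℝ) (H : Matrix (Fin n) (Fin F') ℝ)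
    (hA : ∀ i j, A i j = if i ≠ j ∧ c i = c j then 1 else 0)
    (hAtil : Atil = A + 1)
    (hD : Dinvsqrt = Matrix.diagonal (fun i => (Real.sqrt (∑ j, Atil i j))⁻¹))
    (hAbar : Abar = Dinvsqrt * Atil * Dinvsqrt)
    (hH : H = (Abar * X * W).map σ)
    (hσ : Function.Injective σ)
    (hW : Function.Injective (fun x : Fin F → ℝ => x ᵥ* W))
    (i j : Fin n) (hij : c i ≠ c j)
    (hsum : ∀ ε : ℝ,
      (∑ v ∈ Finset.univ.filter (fun v => c v = c i), X v) ≠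
        ε • (∑ u ∈ Finset.univ.filter (fun u => c u = c j), X u)) :
    H i ≠ H j := by
  -- Atil entries
  have hAtil' : ∀ a b, Atil a b = if c a = c b then 1 else 0 := by
    intro a b
    rw [hAtil]
    simp only [Matrix.add_apply, hA, Matrix.one_apply]
    by_cases hab : a = b
    · subst hab; simp
    · simp [hab]
  -- size of components
  set s : Fin n → ℝ := fun a => ((Finset.univ.filter (fun v => c a = c v)).card : ℝ)
    with hs
  have hrow : ∀ a, (∑ b, Atil a b) = s a := by
    intro a
    simp [hAtil', s, Finset.sum_ite_eq, Finset.sum_boole]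
  have hspos : ∀ a, 0 < s a := by
    intro a
    have : a ∈ Finset.univ.filter (fun v => c a = c v) := by simp
    have h2 := Finset.card_pos.mpr ⟨a, this⟩
    simp only [hs]
    exact_mod_cast h2
  -- Abar entries
  have hAbar' : ∀ a b, Abar a b = if c a = c b then (s a)⁻¹ else 0 := by
    intro a b
    rw [hAbar, hD]
    simp only [Matrix.mul_diagonal, Matrix.diagonal_mul]
    rw [hrow, hrow, hAtil' a b]
    by_cases h : c a = c b
    · have : s b = s a := by simp [s, h]
      rw [this, if_pos h, if_pos h, mul_one,
        ← Real.sqrt_inv, Real.mul_self_sqrt (by positivity)]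
    · simp [h]
  -- rows of Abar * X
  have hrowAX : ∀ a, (Abar * X) a =
      (s a)⁻¹ • ∑ v ∈ Finset.univ.filter (fun v => c v = c a), X v := by
    intro a
    funext f
    simp only [Matrix.mul_apply, hAbar', Pi.smul_apply, Finset.smul_sum,
      Finset.sum_apply, smul_eq_mul]
    rw [← Finset.sum_filter_add_sum_filter_not Finset.univ (fun v => c a = c v)]
    rw [Finset.sum_congr (show Finset.univ.filter (fun v => c a = c v) =
        Finset.univ.filter (fun v => c v = c a) by
      ext; simp [eq_comm]) (fun x hx => by
        simp only [Finset.mem_filter] at hx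
        rw [if_pos hx.2.symm])]
    simp only [ite_mul, zero_mul]
    rw [Finset.sum_ite_of_false (by intro x hx; simp at hx; exact hx), Finset.sum_const_zero,
      add_zero]
    erw [Finset.sum_apply]
    rw [Finset.mul_sum]
  intro hHij
  -- rows of Abar*X*W equal
  have h1 : (Abar * X * W) i = (Abar * X * W) j := by
    funext f'
    apply hσ
    have := congrFun hHij f'
    simpa [hH, Matrix.map_apply] using this
  have h2 : ((Abar * X) i) ᵥ* W = ((Abar * X) j) ᵥ* W := by
    funext f'
    have := congrFun h1 f'
    simpa [Matrix.mul_apply, Matrix.vecMul, dotProduct] using this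
  have h3 := hW h2
  rw [hrowAX i, hrowAX j] at h3
  apply hsum ((s i) * (s j)⁻¹)
  have hsi := (hspos i).ne'
  calc (∑ v ∈ Finset.univ.filter (fun v => c v = c i), X v)
      = (s i) • ((s i)⁻¹ • ∑ v ∈ Finset.univ.filter (fun v => c v = c i), X v) := by
        rw [smul_smul, mul_inv_cancel₀ hsi, one_smul]
    _ = (s i) • ((s j)⁻¹ • ∑ u ∈ Finset.univ.filter (fun u => c u = c j), X u) := by rw [h3]
    _ = ((s i) * (s j)⁻¹) • ∑ u ∈ Finset.univ.filter (fun u => c u = c j), X u := by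
        rw [smul_smul]
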